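/- Let n ≥ 2 be an integer and let c > 0 and ε' > 0 be real numbers. There exists ε > 0, depending only on n, c, and ε', with the following property: whenever λ₁,…,λₙ are positive real numbers satisfying ∑_{i≠k} 1/λᵢ ≤ c − ε' for every k ∈ {1,…,n}, and μ₁,…,μₙ are positive real numbers with μᵢ ≥ λᵢ − ε for every i and ∑_{i=1}^n 1/μᵢ = c, then 1/μₖ ≥ ε'/2, and hence μₖ ≤ 2/ε', for every k ∈ {1,…,n}. -/

import Mathlib

/-- eigenvalue bound in the ABP `C⁰` estimate of Székelyhidi and
Datar–Pingali, diagonal special case. -/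
theorem stmt_4 (n : ℕ) (hn : 2 ≤ n) (c ε' : ℝ) (hc : 0 < c) (hε' : 0 < ε') :
    ∃ ε : ℝ, 0 < ε ∧
      ∀ (l μ : Fin n → ℝ), (∀ i, 0 < l i) → (∀ i, 0 < μ i) →
        (∀ k, ∑ i ∈ Finset.univ.erase k, 1 / l i ≤ c - ε') →
        (∀ i, μ i ≥ l i - ε) →
        (∑ i, 1 / μ i) = c →
        ∀ k, 1 / μ k ≥ ε' / 2 ∧ μ k ≤ 2 / ε' := by
  have hn0 : (0:ℝ) < (n:ℝ) := by positivity
  refine ⟨min (1/(2*c)) (ε'/(4*n*c^2)), lt_min (by positivity) (by positivity), ?_⟩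
  intro l μ hl hμ hcone hle hsum k
  set ε : ℝ := min (1/(2*c)) (ε'/(4*n*c^2)) with hεdef
  have hεpos : 0 < ε := lt_min (by positivity) (by positivity)
  have hε1 : ε ≤ 1/(2*c) := min_le_left _ _
  have hε2 : ε ≤ ε'/(4*n*c^2) := min_le_right _ _
  have hε1' : ε * (2*c) ≤ 1 := (le_div_iff₀ (by positivity)).mp hε1
  have hε2' : ε * (4*(n:ℝ)*c^2) ≤ ε' := (le_div_iff₀ (by positivity)).mp hε2
  haveI : Nontrivial (Fin n) := Fin.nontrivial_iff_two_le.mpr hn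
  -- each l i > 1/c
  have hli : ∀ i, 1 < l i * c := by
    intro i
    obtain ⟨j, hj⟩ := exists_ne i
    have hmem : i ∈ Finset.univ.erase j := Finset.mem_erase.mpr ⟨hj.symm, Finset.mem_univ i⟩
    have h1 : 1 / l i ≤ ∑ m ∈ Finset.univ.erase j, 1 / l m :=
      Finset.single_le_sum (f := fun m => 1 / l m) (fun m _ => one_div_nonneg.mpr (hl m).le) hmem
    have h3 : 1 / l i < c := lt_of_le_of_lt (h1.trans (hcone j)) (by linarith)
    rw [div_lt_iff₀ (hl i)] at h3
    linarith
  -- key pointwise bound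
  have hkey : ∀ i, 1 / μ i ≤ 1 / l i + ε' / (2*n) := by
    intro i
    have hA := hli i
    have hApos := hl i
    have h2ε : 2*ε < l i := by nlinarith
    have hBpos : 0 < l i - ε := by linarith
    have h1 : 1 / μ i ≤ 1 / (l i - ε) :=
      one_div_le_one_div_of_le hBpos (hle i)
    have hcl2 : 1 ≤ (l i * c)^2 := by nlinarith
    have h4 : 4*(n:ℝ)*ε ≤ (l i)^2 * ε' := by
      nlinarith [mul_le_mul_of_nonneg_left hε2' (sq_nonneg (l i)),
        mul_nonneg (mul_nonneg hεpos.le hn0.le) (sub_nonneg.mpr hcl2)]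
    have h5 : l i * ε * ε' ≤ (l i)^2 * ε' / 2 := by
      nlinarith [mul_nonneg (mul_nonneg hApos.le hε'.le) (by linarith : (0:ℝ) ≤ l i - 2*ε)]
    have h2 : 1 / (l i - ε) ≤ 1 / l i + ε' / (2*n) := by
      rw [div_add_div _ _ (ne_of_gt hApos) (by positivity : (2*(n:ℝ)) ≠ 0),
        div_le_div_iff₀ hBpos (by positivity)]
      nlinarith [h4, h5]
    linarith
  -- sum bound over erase k
  have hcard : (Finset.univ.erase k).card = n - 1 := by
    simp [Finset.card_erase_of_mem]
  have hsum2 : ∑ i ∈ Finset.univ.erase k, 1 / μ i ≤ c - ε'/2 := by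
    have h1 : ∑ i ∈ Finset.univ.erase k, 1 / μ i ≤
        ∑ i ∈ Finset.univ.erase k, (1 / l i + ε' / (2*n)) :=
      Finset.sum_le_sum fun i _ => hkey i
    rw [Finset.sum_add_distrib, Finset.sum_const, hcard, nsmul_eq_mul] at h1
    have hcast : ((n - 1 : ℕ) : ℝ) ≤ (n:ℝ) := by
      exact_mod_cast Nat.cast_le.mpr (Nat.sub_le n 1)
    have heq : (n:ℝ) * (ε' / (2*n)) = ε'/2 := by field_simp
    have h2 : ((n-1:ℕ):ℝ) * (ε' / (2*n)) ≤ ε'/2 := by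
      rw [← heq]
      exact mul_le_mul_of_nonneg_right hcast (by positivity)
    linarith [hcone k]
  have hsplit : 1 / μ k + ∑ i ∈ Finset.univ.erase k, 1 / μ i = c :=
    (Finset.add_sum_erase Finset.univ (fun i => 1 / μ i) (Finset.mem_univ k)).trans hsum
  have hmain : 1 / μ k ≥ ε' / 2 := by linarith
  refine ⟨hmain, ?_⟩
  have hμk := hμ k
  have hone : μ k * (1 / μ k) = 1 := by field_simp
  have := mul_le_mul_of_nonneg_left hmain hμk.le
  rw [le_div_iff₀ hε']
  nlinarith
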